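/- The output of Ranked Pairs satisfies (γ, f/n)-minimal-batch-order-fairness for every γ with 1/2 < γ ≤ 1 simultaneously: if at least γn of the true observed orderings rank τ before τ' but the output ranks τ' before τ, then there is a sequence of transactions τ' = τ_1, ..., τ_k = τ such that at least (γ − 2f/n)·n of the true observed orderings rank τ_i before τ_{i+1} and the output ranks τ_i before τ_{i+1}, for every 1 ≤ i ≤ k−1. -/

import Mathlib

/-- The fraction of the `n` voters (each voter `i` ranking transactions by the
injective rank function `rank i`) that rank `a` before `b`. -/
def voteWeight {V : Type*} (n : ℕ) (rank : Fin n → V → ℕ) (a b : V) : ℚ :=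
  ((Finset.univ.filter (fun i : Fin n => rank i a < rank i b)).card : ℚ) / n

/-- A set `H` of directed edges has a directed cycle. -/
def hasCycle {V : Type*} (H : Set (V × V)) : Prop :=
  ∃ v : V, Relation.TransGen (fun a b : V => (a, b) ∈ H) v v

/-- The greedy (Ranked Pairs) edge-selection process: iterate over the list of
edges, adding each edge to the accumulated set `H` unless doing so would create a
directed cycle in `H`. -/
noncomputable def greedy {V : Type*} : List (V × V) → Set (V × V) → Set (V × V)
  | [], H => H
  | e :: rest, H =>
      greedy rest
        (@ite _ (hasCycle (insert e H)) (Classical.propDecidable _) H (insert e H))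

lemma greedy_subset {V : Type*} : ∀ (L : List (V × V)) (H : Set (V × V)), H ⊆ greedy L H
  | [], H => by simp [greedy]
  | e :: rest, H => by
    rw [greedy]
    split
    · exact greedy_subset rest H
    · exact (Set.subset_insert e H).trans (greedy_subset rest _)

lemma greedy_mem {V : Type*} : ∀ (L : List (V × V)) (H : Set (V × V)),
    greedy L H ⊆ H ∪ {e | e ∈ L}
  | [], H => by simp [greedy]
  | e :: rest, H => by
    rw [greedy]
    split
    · refine (greedy_mem rest H).trans ?_
      intro x hx
      rcases hx with hx | hx
      · exact Or.inl hx
      · exact Or.inr (by simpa using Or.inr (by simpa using hx : x ∈ rest))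
    · refine (greedy_mem rest _).trans ?_
      intro x hx
      rcases hx with hx | hx
      · rcases hx with rfl | hx
        · exact Or.inr (by simp)
        · exact Or.inl hx
      · exact Or.inr (by simpa using Or.inr (by simpa using hx : x ∈ rest))

lemma greedy_acyclic {V : Type*} : ∀ (L : List (V × V)) (H : Set (V × V)),
    ¬ hasCycle H → ¬ hasCycle (greedy L H)
  | [], H, h => by simpa [greedy] using h
  | e :: rest, H, h => by
    rw [greedy]
    split
    · exact greedy_acyclic rest H h
    · exact greedy_acyclic rest _ ‹¬ _›

lemma greedy_append {V : Type*} : ∀ (l₁ l₂ : List (V × V)) (H : Set (V × V)),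
    greedy (l₁ ++ l₂) H = greedy l₂ (greedy l₁ H)
  | [], l₂, H => by simp [greedy]
  | e :: rest, l₂, H => by
    rw [List.cons_append, greedy, greedy, greedy_append rest l₂ _]

lemma transGen_insert {V : Type*} {H : Set (V × V)} {a b x y : V}
    (h : Relation.TransGen (fun p q : V => (p, q) ∈ insert (a, b) H) x y) :
    Relation.TransGen (fun p q : V => (p, q) ∈ H) x y ∨
      (Relation.ReflTransGen (fun p q : V => (p, q) ∈ H) x a ∧
       Relation.ReflTransGen (fun p q : V => (p, q) ∈ H) b y) := by
  induction h with
  | single h =>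
    rcases Set.mem_insert_iff.mp h with h | h
    · obtain ⟨h1, h2⟩ := Prod.mk.injEq .. ▸ h
      exact Or.inr ⟨by rw [h1], by rw [h2]⟩
    · exact Or.inl (Relation.TransGen.single h)
  | tail _ hR ih =>
    rename_i c d _
    rcases Set.mem_insert_iff.mp hR with h | h
    · obtain ⟨h1, h2⟩ := Prod.mk.injEq .. ▸ h
      rcases ih with ih | ih
      · exact Or.inr ⟨h1 ▸ ih.to_reflTransGen, h2 ▸ Relation.ReflTransGen.refl⟩
      · exact Or.inr ⟨ih.1, h2 ▸ Relation.ReflTransGen.refl⟩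
    · rcases ih with ih | ih
      · exact Or.inl (ih.tail h)
      · exact Or.inr ⟨ih.1, ih.2.tail h⟩

lemma cycle_insert {V : Type*} {H : Set (V × V)} {a b : V}
    (hH : ¬ hasCycle H) (hab : a ≠ b)
    (h : hasCycle (insert (a, b) H)) :
    Relation.TransGen (fun p q : V => (p, q) ∈ H) b a := by
  obtain ⟨v, hv⟩ := h
  rcases transGen_insert hv with h | ⟨h1, h2⟩
  · exact absurd ⟨v, h⟩ hH
  · have hba : Relation.ReflTransGen (fun p q : V => (p, q) ∈ H) b a := h2.trans h1
    rcases hba.cases_head with rfl | ⟨c, hc, hca⟩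
    · exact absurd rfl hab
    · exact Relation.TransGen.head' hc hca

lemma transGen_to_list {V : Type*} {R : V → V → Prop} {x y : V}
    (h : Relation.TransGen R x y) :
    ∃ l : List V, l.head? = some x ∧ l.getLast? = some y ∧ l.Chain' R := by
  induction h using Relation.TransGen.head_induction_on with
  | single h => exact ⟨[_, y], rfl, rfl, by simp [List.Chain', h]⟩
  | head hR _ ih' =>
    obtain ⟨l, h1, h2, h3⟩ := ih'
    refine ⟨_ :: l, rfl, ?_, ?_⟩
    · cases l with
      | nil => simp at h1
      | cons b t => simpa using h2
    · rw [List.Chain', List.isChain_cons]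
      refine ⟨fun z hz => ?_, h3⟩
      rw [h1, Option.mem_def, Option.some.injEq] at hz
      exact hz ▸ hR

lemma empty_acyclic {V : Type*} : ¬ hasCycle (∅ : Set (V × V)) := by
  rintro ⟨v, hv⟩
  rcases (Relation.transGen_iff _ _ _).mp hv with h | ⟨c, _, h⟩ <;> exact h

lemma weight_close {V : Type*} {n f : ℕ} (hn : 0 < n)
    (r₁ r₂ : Fin n → V → ℕ) (honest : Finset (Fin n)) (hhcard : n - f ≤ honest.card)
    (hhon : ∀ i ∈ honest, r₂ i = r₁ i) (a b : V) :
    voteWeight n r₁ a b ≤ voteWeight n r₂ a b + (f : ℚ) / n := by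
  have hcard : (Finset.univ.filter (fun i : Fin n => r₁ i a < r₁ i b)).card ≤
      (Finset.univ.filter (fun i : Fin n => r₂ i a < r₂ i b)).card + f := by
    have hsub : (Finset.univ.filter (fun i : Fin n => r₁ i a < r₁ i b)) ⊆
        (Finset.univ.filter (fun i : Fin n => r₂ i a < r₂ i b)) ∪ (Finset.univ \ honest) := by
      intro i hi
      simp only [Finset.mem_filter, Finset.mem_univ, true_and] at hi
      by_cases hih : i ∈ honest
      · exact Finset.mem_union_left _ (by
          simp only [Finset.mem_filter, Finset.mem_univ, true_and, hhon i hih]; exact hi)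
      · exact Finset.mem_union_right _ (by simp [hih])
    calc _ ≤ _ := Finset.card_le_card hsub
      _ ≤ _ + (Finset.univ \ honest).card := Finset.card_union_le _ _
      _ ≤ _ + f := by
          have : (Finset.univ \ honest).card = n - honest.card := by
            rw [Finset.card_sdiff_of_subset (Finset.subset_univ _), Finset.card_univ, Fintype.card_fin]
          have hcle : honest.card ≤ n := le_of_le_of_eq (Finset.card_le_card
            (Finset.subset_univ _)) (by rw [Finset.card_univ, Fintype.card_fin])
          omega
  unfold voteWeight
  rw [← add_div, div_le_div_iff_of_pos_right (by exact_mod_cast hn)]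
  exact_mod_cast hcard


/-- Ranked Pairs, run on the reported orders of `n` replicas of which all but at
most `f` are honest (report their true observed order), satisfies
`(γ, f/n)`-minimal-batch-order-fairness simultaneously for every `1/2 < γ ≤ 1`:
if at least a `γ` fraction of the true observed orderings rank `τ` before `τ'` but
the output ranks `τ'` before `τ`, then there is a sequence `τ' = τ_1, ..., τ_k = τ`
such that at least a `γ − 2f/n` fraction of the true observed orderings rank
`τ_i` before `τ_{i+1}` and the output ranks `τ_i` before `τ_{i+1}` for every `i`. -/
theorem rankedPairs_minimal_batch_order_fair {V : Type*} [Fintype V]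
    {n f : ℕ} (hn : 0 < n)
    (trueRank repRank : Fin n → V → ℕ)
    (htrue : ∀ i, Function.Injective (trueRank i))
    (hrep : ∀ i, Function.Injective (repRank i))
    (honest : Finset (Fin n)) (hhcard : n - f ≤ honest.card)
    (hhon : ∀ i ∈ honest, repRank i = trueRank i)
    (L : List (V × V))
    (hmemL : ∀ a b : V, a ≠ b → (a, b) ∈ L)
    (hnd : L.Nodup)
    (hirr : ∀ e ∈ L, e.1 ≠ e.2)
    (hsort : L.Pairwise (fun e f' =>
      voteWeight n repRank f'.1 f'.2 ≤ voteWeight n repRank e.1 e.2)) :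
    ∀ γ : ℚ, 1 / 2 < γ → γ ≤ 1 →
      ∀ τ τ' : V, τ ≠ τ' →
        γ ≤ voteWeight n trueRank τ τ' →
        (τ', τ) ∈ greedy L ∅ →
        ∃ l : List V, l.head? = some τ' ∧ l.getLast? = some τ ∧
          l.Chain' (fun a b : V =>
            γ - 2 * ((f : ℚ) / n) ≤ voteWeight n trueRank a b ∧
            (a, b) ∈ greedy L ∅) := by
  intro γ hγ hγ1 τ τ' hττ' hγw hout
  -- split the list at the edge (τ, τ')
  obtain ⟨L₁, L₂, hL⟩ := List.append_of_mem (hmemL τ τ' hττ')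
  set H₁ := greedy L₁ (∅ : Set (V × V)) with hH₁
  have hstep : greedy L ∅ = greedy L₂
      (@ite _ (hasCycle (insert (τ, τ') H₁)) (Classical.propDecidable _)
        H₁ (insert (τ, τ') H₁)) := by
    rw [hL, greedy_append, greedy]
  have hH₁acyc : ¬ hasCycle H₁ := greedy_acyclic _ _ empty_acyclic
  have hWacyc : ¬ hasCycle (greedy L ∅) := greedy_acyclic _ _ empty_acyclic
  -- the edge (τ, τ') must have been rejected
  have hcyc : hasCycle (insert (τ, τ') H₁) := by
    by_contra hnc
    have hin : (τ, τ') ∈ greedy L ∅ := by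
      rw [hstep, if_neg hnc]
      exact greedy_subset _ _ (Set.mem_insert _ _)
    exact hWacyc ⟨τ, Relation.TransGen.tail (Relation.TransGen.single hin) hout⟩
  -- hence there is a path from τ' to τ in H₁
  have hpath : Relation.TransGen (fun p q : V => (p, q) ∈ H₁) τ' τ :=
    cycle_insert hH₁acyc hττ' hcyc
  -- H₁ is contained in the final output
  have hH₁sub : H₁ ⊆ greedy L ∅ := by
    rw [hstep]
    refine Set.Subset.trans ?_ (greedy_subset _ _)
    rw [if_pos hcyc]
  -- edges of H₁ lie in L₁
  have hH₁L₁ : ∀ e ∈ H₁, e ∈ L₁ := by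
    intro e he
    rcases greedy_mem L₁ ∅ he with h | h
    · exact absurd h (Set.notMem_empty e)
    · exact h
  -- weight bound for every edge of H₁
  have hwt : ∀ a b : V, (a, b) ∈ H₁ → γ - 2 * ((f : ℚ) / n) ≤ voteWeight n trueRank a b := by
    intro a b hab
    have h1 : voteWeight n repRank τ τ' ≤ voteWeight n repRank a b := by
      have hpw := (List.pairwise_append.mp (hL ▸ hsort)).2.2
      exact hpw (a, b) (hH₁L₁ _ hab) (τ, τ') List.mem_cons_self
    have h2 : voteWeight n trueRank τ τ' ≤ voteWeight n repRank τ τ' + (f : ℚ) / n :=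
      weight_close hn trueRank repRank honest hhcard hhon τ τ'
    have h3 : voteWeight n repRank a b ≤ voteWeight n trueRank a b + (f : ℚ) / n :=
      weight_close hn repRank trueRank honest hhcard (fun i hi => (hhon i hi).symm) a b
    linarith
  -- extract the list from the path
  obtain ⟨l, hl1, hl2, hl3⟩ := transGen_to_list hpath
  exact ⟨l, hl1, hl2, hl3.imp fun a b hab => ⟨hwt a b hab, hH₁sub hab⟩⟩
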